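/- For all integers η, l ≥ 1 and k ≥ 2, and every integer q ≥ 0, the generalized windmill graph of Type I satisfies Z_q(W'(η,k,l)) = Z(W'(η,k,l)) = η(k−1) + l. -/

import Mathlib

namespace ZqForcing

variable {V : Type*}

/-- `u` forces `v` within the allowed vertex set `A`, given the filled set `F`:
`u` is filled, `v` is its unique unfilled neighbor inside `A`. -/
def forceIn (G : SimpleGraph V) (A F : Set V) (u v : V) : Prop :=
  u ∈ A ∧ v ∈ A ∧ u ∈ F ∧ v ∉ F ∧ G.Adj u v ∧
    ∀ w ∈ A, G.Adj u w → w ∉ F → w = v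

/-- One step of the standard zero forcing color change rule. -/
def zfStep (G : SimpleGraph V) (F F' : Set V) : Prop :=
  ∃ u v, forceIn G Set.univ F u v ∧ F' = insert v F

/-- `S` is a zero forcing set: repeated color changes fill all of `V`. -/
def IsZeroForcingSet (G : SimpleGraph V) (S : Set V) : Prop :=
  Relation.ReflTransGen (zfStep G) S Set.univ

/-- The zero forcing number `Z(G)`. -/
noncomputable def zeroForcingNumber (G : SimpleGraph V) : ℕ :=
  sInf {n | ∃ S : Set V, S.ncard = n ∧ IsZeroForcingSet G S}

/-- Reachability in `G - F`, i.e. through vertices avoiding `F`. -/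
def reachAvoid (G : SimpleGraph V) (F : Set V) : V → V → Prop :=
  Relation.ReflTransGen (fun a b => G.Adj a b ∧ a ∉ F ∧ b ∉ F)

/-- The positive semidefinite color change rule: filled `u` forces unfilled `v` when `v`
is the unique neighbor of `u` in the connected component of `G - F` containing `v`. -/
def psdForce (G : SimpleGraph V) (F : Set V) (u v : V) : Prop :=
  u ∈ F ∧ v ∉ F ∧ G.Adj u v ∧
    ∀ w, G.Adj u w → w ∉ F → reachAvoid G F v w → w = v

/-- One step of the positive semidefinite color change rule. -/
def psdStep (G : SimpleGraph V) (F F' : Set V) : Prop :=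
  ∃ u v, psdForce G F u v ∧ F' = insert v F

/-- `S` is a positive semidefinite zero forcing set. -/
def IsPSDForcingSet (G : SimpleGraph V) (S : Set V) : Prop :=
  Relation.ReflTransGen (psdStep G) S Set.univ

/-- The positive semidefinite zero forcing number `Z₊(G)`. -/
noncomputable def psdZeroForcingNumber (G : SimpleGraph V) : ℕ :=
  sInf {n | ∃ S : Set V, S.ncard = n ∧ IsPSDForcingSet G S}

/-- The vertex sets of the connected components of the subgraph induced on
the unfilled vertices. -/
def unfilledComponents (G : SimpleGraph V) (F : Set V) : Set (Set V) :=
  {C | ∃ v, v ∉ F ∧ C = {w | reachAvoid G F v w}}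

/-- A forcing step performed inside the induced subgraph on the vertex set `A`. -/
def rule3Step (G : SimpleGraph V) (A F F' : Set V) : Prop :=
  ∃ u v, forceIn G A F u v ∧ F' = insert v F

/-- `ZqWinFrom G q F t`: starting from the filled set `F`, the player can guarantee to
fill all vertices using at most `t` further tokens against every oracle strategy, in the
`q`-analogue zero forcing game. -/
inductive ZqWinFrom (G : SimpleGraph V) (q : ℕ) : Set V → ℕ → Prop
  | done (t : ℕ) : ZqWinFrom G q Set.univ t
  | rule1 {F : Set V} {t : ℕ} (v : V) (hv : v ∉ F)
      (h : ZqWinFrom G q (insert v F) t) : ZqWinFrom G q F (t + 1)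
  | rule2 {F : Set V} {t : ℕ} (u v : V) (huv : forceIn G Set.univ F u v)
      (h : ZqWinFrom G q (insert v F) t) : ZqWinFrom G q F t
  | rule3 {F : Set V} {t : ℕ} (𝒞 : Set (Set V))
      (h𝒞 : 𝒞 ⊆ unfilledComponents G F) (hcard : q + 1 ≤ 𝒞.ncard)
      (next : ∀ 𝒮 : Set (Set V), 𝒮 ⊆ 𝒞 → 𝒮.Nonempty → Set V)
      (hnext : ∀ (𝒮 : Set (Set V)) (h1 : 𝒮 ⊆ 𝒞) (h2 : 𝒮.Nonempty),
        Relation.ReflTransGen (rule3Step G (F ∪ ⋃₀ 𝒮)) F (next 𝒮 h1 h2))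
      (h : ∀ (𝒮 : Set (Set V)) (h1 : 𝒮 ⊆ 𝒞) (h2 : 𝒮.Nonempty),
        ZqWinFrom G q (next 𝒮 h1 h2) t) :
      ZqWinFrom G q F t

/-- The `q`-analogue zero forcing number `Z_q(G)`. -/
noncomputable def qZeroForcingNumber (G : SimpleGraph V) (q : ℕ) : ℕ :=
  sInf {t | ZqWinFrom G q ∅ t}

/-- The induced subgraph on `B` is connected and has no cut vertex. -/
def NoCutVertex (G : SimpleGraph V) (B : Set V) : Prop :=
  (G.induce B).Connected ∧
    ∀ v ∈ B, (B \ {v}).Nonempty → (G.induce (B \ {v})).Connected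

/-- `B` is a block of `G`: a maximal (vertex set of a) connected subgraph without
a cut vertex. -/
def IsBlock (G : SimpleGraph V) (B : Set V) : Prop :=
  NoCutVertex G B ∧ ∀ B' : Set V, B ⊆ B' → NoCutVertex G B' → B' = B

/-- A block graph: a connected graph each of whose blocks is a clique. -/
def IsBlockGraph (G : SimpleGraph V) : Prop :=
  G.Connected ∧ ∀ B : Set V, IsBlock G B → G.IsClique B

/-- A cactus graph: connected, and every edge lies on at most one cycle
(cycles being identified when they have the same edge set). -/
def IsCactus (G : SimpleGraph V) : Prop :=
  G.Connected ∧ ∀ (a b : V) (c : G.Walk a a) (d : G.Walk b b),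
    c.IsCycle → d.IsCycle → ∀ e ∈ c.edges, e ∈ d.edges →
      ∀ e', e' ∈ c.edges ↔ e' ∈ d.edges

/-- `c` is an induced (chordless) cycle of `G`. -/
def IsInducedCycle (G : SimpleGraph V) {v : V} (c : G.Walk v v) : Prop :=
  c.IsCycle ∧ ∀ x ∈ c.support, ∀ y ∈ c.support, G.Adj x y → s(x, y) ∈ c.edges

/-- Generalized windmill graph of Type I: η disjoint copies of `K_k` together with
`l` central vertices forming a clique, each central vertex adjacent to everything. -/
def windmillI (η k l : ℕ) : SimpleGraph ((Fin η × Fin k) ⊕ Fin l) :=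
  SimpleGraph.fromRel (fun a b =>
    match a, b with
    | Sum.inl (i, _), Sum.inl (i', _) => i = i'
    | Sum.inr _, Sum.inr _ => True
    | _, _ => True)

/-- Generalized windmill graph of Type II: η disjoint copies of `K_k` together with
`l` pairwise nonadjacent central vertices, each adjacent to every clique vertex. -/
def windmillII (η k l : ℕ) : SimpleGraph ((Fin η × Fin k) ⊕ Fin l) :=
  SimpleGraph.fromRel (fun a b =>
    match a, b with
    | Sum.inl (i, _), Sum.inl (i', _) => i = i'
    | Sum.inr _, Sum.inr _ => False
    | _, _ => True)

/-- Generalized star (spider) graph: a center `none` together with `k` disjoint paths,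
the `i`-th of length `m i`, attached to the center at one endpoint. -/
def spider {k : ℕ} (m : Fin k → ℕ) : SimpleGraph (Option (Σ i : Fin k, Fin (m i))) :=
  SimpleGraph.fromRel (fun a b =>
    match a, b with
    | none, some ⟨_, j⟩ => j.val = 0
    | some ⟨i, j⟩, some ⟨i', j'⟩ => i = i' ∧ j.val + 1 = j'.val
    | _, _ => False)


section Aux
open Sum Set

variable {η k l : ℕ}

lemma wadj_inl_inl {i i' : Fin η} {x x' : Fin k} :
    (windmillI η k l).Adj (Sum.inl (i,x)) (Sum.inl (i',x')) ↔ i = i' ∧ x ≠ x' := by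
  simp only [windmillI, SimpleGraph.fromRel_adj]
  constructor
  · rintro ⟨hne, h | h⟩ <;> subst h <;> exact ⟨rfl, fun hx => hne (by rw [hx])⟩
  · rintro ⟨rfl, hx⟩; exact ⟨by simpa using hx, Or.inl rfl⟩

lemma wadj_to_inr {a : (Fin η × Fin k) ⊕ Fin l} {z : Fin l} (h : a ≠ Sum.inr z) :
    (windmillI η k l).Adj a (Sum.inr z) := by
  cases a <;> simp [windmillI, SimpleGraph.fromRel_adj, h]

lemma wadj_of_inr {a : (Fin η × Fin k) ⊕ Fin l} {z : Fin l} (h : a ≠ Sum.inr z) :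
    (windmillI η k l).Adj (Sum.inr z) a := (wadj_to_inr h).symm


def cpy (k l : ℕ) (i : Fin η) : Set ((Fin η × Fin k) ⊕ Fin l) := {w | ∃ x : Fin k, w = Sum.inl (i, x)}

def ctrs (η k l : ℕ) : Set ((Fin η × Fin k) ⊕ Fin l) := Set.range Sum.inr

open scoped Classical in
noncomputable def pot (F : Set ((Fin η × Fin k) ⊕ Fin l)) : ℕ :=
  (∑ i : Fin η, ((Fᶜ ∩ cpy k l i).ncard - 1)) +
    ((Fᶜ ∩ ctrs η k l).ncard -
      (if (∃ z : Fin l, Sum.inr z ∉ F) ∧ (∃ i : Fin η, cpy k l i ⊆ F) then 1 else 0))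

lemma compl_insert' {α : Type*} (v : α) (F : Set α) : (insert v F)ᶜ = Fᶜ \ {v} := by
  ext w; simp only [Set.mem_compl_iff, Set.mem_insert_iff, Set.mem_diff, Set.mem_singleton_iff]
  tauto

lemma inr_not_mem_cpy {z : Fin l} {i : Fin η} : (Sum.inr z : (Fin η × Fin k) ⊕ Fin l) ∉ cpy k l i := by
  rintro ⟨x, h⟩; exact nomatch h

lemma inl_not_mem_ctrs {p : Fin η × Fin k} : (Sum.inl p : (Fin η × Fin k) ⊕ Fin l) ∉ ctrs η k l := by
  rintro ⟨z, h⟩; exact nomatch h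

lemma mem_cpy_iff {i j : Fin η} {x : Fin k} :
    (Sum.inl (j, x) : (Fin η × Fin k) ⊕ Fin l) ∈ cpy k l i ↔ i = j := by
  constructor
  · rintro ⟨x', h⟩; cases h; rfl
  · rintro rfl; exact ⟨x, rfl⟩

lemma potPA {F : Set ((Fin η × Fin k) ⊕ Fin l)} {j : Fin η} {y : Fin k}
    (hmem : Fᶜ ∩ cpy k l j = {Sum.inl (j, y)}) (hctr : ctrs η k l ⊆ F) :
    pot (insert (Sum.inl (j, y)) F) = pot F := by
  classical
  set v : (Fin η × Fin k) ⊕ Fin l := Sum.inl (j, y) with hv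
  have hcompl : (insert v F)ᶜ = Fᶜ \ {v} := compl_insert' v F
  have h1 : ∀ i : Fin η, ((insert v F)ᶜ ∩ cpy k l i).ncard - 1 = (Fᶜ ∩ cpy k l i).ncard - 1 := by
    intro i
    rw [hcompl]
    by_cases hij : i = j
    · subst hij
      have he : (Fᶜ \ {v}) ∩ cpy k l i = (Fᶜ ∩ cpy k l i) \ {v} := by
        ext w; simp only [Set.mem_inter_iff, Set.mem_diff, Set.mem_singleton_iff]; tauto
      rw [he, hmem]
      simp
    · have he : (Fᶜ \ {v}) ∩ cpy k l i = Fᶜ ∩ cpy k l i := by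
        ext w
        simp only [Set.mem_inter_iff, Set.mem_diff, Set.mem_singleton_iff]
        constructor
        · tauto
        · rintro ⟨h1, h2⟩
          refine ⟨⟨h1, ?_⟩, h2⟩
          rintro rfl
          exact hij (mem_cpy_iff.mp h2)
      rw [he]
  have hctr1 : Fᶜ ∩ ctrs η k l = ∅ := by
    ext w; simp only [Set.mem_inter_iff, Set.mem_compl_iff, Set.mem_empty_iff_false, iff_false]
    rintro ⟨h1, h2⟩; exact h1 (hctr h2)
  have hctr2 : (insert v F)ᶜ ∩ ctrs η k l = ∅ := by
    ext w; simp only [Set.mem_inter_iff, Set.mem_compl_iff, Set.mem_empty_iff_false, iff_false]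
    rintro ⟨h1, h2⟩; exact h1 (Set.subset_insert _ _ (hctr h2))
  unfold pot
  rw [hctr1, hctr2]
  simp only [Set.ncard_empty, Nat.zero_sub, add_zero]
  exact Finset.sum_congr rfl fun i _ => h1 i

lemma potPB {F : Set ((Fin η × Fin k) ⊕ Fin l)} {z : Fin l}
    (hmem : Fᶜ ∩ ctrs η k l = {Sum.inr z}) (hfull : ∃ i : Fin η, cpy k l i ⊆ F) :
    pot (insert (Sum.inr z) F) = pot F := by
  classical
  set v : (Fin η × Fin k) ⊕ Fin l := Sum.inr z with hv
  have hcompl : (insert v F)ᶜ = Fᶜ \ {v} := compl_insert' v F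
  have h1 : ∀ i : Fin η, (insert v F)ᶜ ∩ cpy k l i = Fᶜ ∩ cpy k l i := by
    intro i
    rw [hcompl]
    ext w
    simp only [Set.mem_inter_iff, Set.mem_diff, Set.mem_singleton_iff]
    constructor
    · tauto
    · rintro ⟨h1, h2⟩
      refine ⟨⟨h1, ?_⟩, h2⟩
      rintro rfl
      exact inr_not_mem_cpy h2
  have hvF : v ∉ F := by
    have : v ∈ Fᶜ ∩ ctrs η k l := by rw [hmem]; rfl
    exact this.1
  have hd1 : ((∃ z' : Fin l, Sum.inr z' ∉ F) ∧ (∃ i : Fin η, cpy k l i ⊆ F)) := ⟨⟨z, hvF⟩, hfull⟩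
  have hctr2 : (insert v F)ᶜ ∩ ctrs η k l = ∅ := by
    rw [hcompl]
    have he : (Fᶜ \ {v}) ∩ ctrs η k l = (Fᶜ ∩ ctrs η k l) \ {v} := by
      ext w; simp only [Set.mem_inter_iff, Set.mem_diff, Set.mem_singleton_iff]; tauto
    rw [he, hmem]
    simp
  unfold pot
  rw [hctr2, hmem]
  rw [if_pos hd1]
  simp only [Set.ncard_empty, Set.ncard_singleton, Nat.zero_sub, Nat.sub_self]
  apply congrArg (· + 0)
  exact Finset.sum_congr rfl fun i _ => by rw [h1 i]


lemma pot_le_insert {F : Set ((Fin η × Fin k) ⊕ Fin l)} {v} (hv : v ∉ F) :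
    pot F ≤ pot (insert v F) + 1 := by
  classical
  have hcompl : (insert v F)ᶜ = Fᶜ \ {v} := compl_insert' v F
  obtain ⟨j, y⟩ | z := v
  · set v : (Fin η × Fin k) ⊕ Fin l := Sum.inl (j,y) with hvdef
    have hcpy : ∀ i : Fin η, i ≠ j → (insert v F)ᶜ ∩ cpy k l i = Fᶜ ∩ cpy k l i := by
      intro i hij
      rw [hcompl]; ext w
      simp only [Set.mem_inter_iff, Set.mem_diff, Set.mem_singleton_iff]
      constructor
      · tauto
      · rintro ⟨h1, h2⟩
        exact ⟨⟨h1, fun hw => hij (by rw [hw] at h2; exact mem_cpy_iff.mp h2)⟩, h2⟩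
    have hmemj : v ∈ Fᶜ ∩ cpy k l j := ⟨hv, y, rfl⟩
    have hj : ((insert v F)ᶜ ∩ cpy k l j).ncard + 1 = (Fᶜ ∩ cpy k l j).ncard := by
      rw [hcompl]
      have he : (Fᶜ \ {v}) ∩ cpy k l j = (Fᶜ ∩ cpy k l j) \ {v} := by
        ext w; simp only [Set.mem_inter_iff, Set.mem_diff, Set.mem_singleton_iff]; tauto
      rw [he]
      exact Set.ncard_diff_singleton_add_one hmemj (Set.toFinite _)
    have hctr : (insert v F)ᶜ ∩ ctrs η k l = Fᶜ ∩ ctrs η k l := by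
      rw [hcompl]; ext w
      simp only [Set.mem_inter_iff, Set.mem_diff, Set.mem_singleton_iff]
      constructor
      · tauto
      · rintro ⟨h1, h2⟩
        exact ⟨⟨h1, fun hw => by rw [hw] at h2; exact inl_not_mem_ctrs h2⟩, h2⟩
    unfold pot
    rw [← Finset.sum_erase_add Finset.univ _ (Finset.mem_univ j),
        ← Finset.sum_erase_add Finset.univ
          (fun i => (((insert v F)ᶜ ∩ cpy k l i).ncard - 1)) (Finset.mem_univ j)]
    have hrest : ∑ i ∈ Finset.univ.erase j, (((insert v F)ᶜ ∩ cpy k l i).ncard - 1)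
        = ∑ i ∈ Finset.univ.erase j, ((Fᶜ ∩ cpy k l i).ncard - 1) :=
      Finset.sum_congr rfl fun i hi => by rw [hcpy i (Finset.ne_of_mem_erase hi)]
    rw [hrest, hctr, ← hj]
    by_cases hC2 : (∃ z : Fin l, Sum.inr z ∉ insert v F) ∧ (∃ i : Fin η, cpy k l i ⊆ insert v F)
    · by_cases hC1 : (∃ z : Fin l, Sum.inr z ∉ F) ∧ (∃ i : Fin η, cpy k l i ⊆ F)
      · rw [if_pos hC1, if_pos hC2]; omega
      · rw [if_neg hC1, if_pos hC2]
        obtain ⟨⟨z, hz⟩, ⟨i₀, hi₀⟩⟩ := hC2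
        have hz' : Sum.inr z ∉ F := fun h => hz (Set.mem_insert_of_mem _ h)
        have hnotfull : ¬ ∃ i : Fin η, cpy k l i ⊆ F := fun h => hC1 ⟨⟨z, hz'⟩, h⟩
        have hji : i₀ = j := by
          by_contra hij
          apply hnotfull
          refine ⟨i₀, fun w hw => ?_⟩
          rcases hi₀ hw with h | h
          · exfalso; rw [h] at hw; exact hij (mem_cpy_iff.mp hw)
          · exact h
        subst hji
        have ha' : ((insert v F)ᶜ ∩ cpy k l i₀).ncard = 0 := by
          rw [Set.ncard_eq_zero (Set.toFinite _)]
          ext w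
          simp only [Set.mem_inter_iff, Set.mem_compl_iff, Set.mem_empty_iff_false, iff_false]
          rintro ⟨h1, h2⟩; exact h1 (hi₀ h2)
        have hc1 : 1 ≤ (Fᶜ ∩ ctrs η k l).ncard := by
          rw [Nat.one_le_iff_ne_zero, Ne, Set.ncard_eq_zero (Set.toFinite _)]
          intro hemp
          have : (Sum.inr z : (Fin η × Fin k) ⊕ Fin l) ∈ Fᶜ ∩ ctrs η k l := ⟨hz', z, rfl⟩
          rw [hemp] at this; exact this
        omega
    · have hC1 : ¬ ((∃ z : Fin l, Sum.inr z ∉ F) ∧ (∃ i : Fin η, cpy k l i ⊆ F)) := by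
        rintro ⟨⟨z, hz⟩, ⟨i, hi⟩⟩
        exact hC2 ⟨⟨z, fun h => by
          rcases Set.mem_insert_iff.mp h with h | h
          · exact Sum.inr_ne_inl (h.trans hvdef)
          · exact hz h⟩, ⟨i, hi.trans (Set.subset_insert _ _)⟩⟩
      rw [if_neg hC1, if_neg hC2]; omega
  · set v : (Fin η × Fin k) ⊕ Fin l := Sum.inr z with hvdef
    have hcpy : ∀ i : Fin η, (insert v F)ᶜ ∩ cpy k l i = Fᶜ ∩ cpy k l i := by
      intro i
      rw [hcompl]; ext w
      simp only [Set.mem_inter_iff, Set.mem_diff, Set.mem_singleton_iff]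
      constructor
      · tauto
      · rintro ⟨h1, h2⟩
        exact ⟨⟨h1, fun hw => by rw [hw] at h2; exact inr_not_mem_cpy h2⟩, h2⟩
    have hc : ((insert v F)ᶜ ∩ ctrs η k l).ncard + 1 = (Fᶜ ∩ ctrs η k l).ncard := by
      rw [hcompl]
      have he : (Fᶜ \ {v}) ∩ ctrs η k l = (Fᶜ ∩ ctrs η k l) \ {v} := by
        ext w; simp only [Set.mem_inter_iff, Set.mem_diff, Set.mem_singleton_iff]; tauto
      rw [he]
      exact Set.ncard_diff_singleton_add_one ⟨hv, z, rfl⟩ (Set.toFinite _)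
    unfold pot
    have hsum : ∑ i : Fin η, (((insert v F)ᶜ ∩ cpy k l i).ncard - 1)
        = ∑ i : Fin η, ((Fᶜ ∩ cpy k l i).ncard - 1) :=
      Finset.sum_congr rfl fun i _ => by rw [hcpy i]
    rw [hsum, ← hc]
    by_cases hC2 : (∃ z' : Fin l, Sum.inr z' ∉ insert v F) ∧ (∃ i : Fin η, cpy k l i ⊆ insert v F)
    · have hC1 : (∃ z' : Fin l, Sum.inr z' ∉ F) ∧ (∃ i : Fin η, cpy k l i ⊆ F) := by
        obtain ⟨⟨z', hz'⟩, ⟨i, hi⟩⟩ := hC2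
        refine ⟨⟨z', fun h => hz' (Set.mem_insert_of_mem _ h)⟩, ⟨i, fun w hw => ?_⟩⟩
        rcases Set.mem_insert_iff.mp (hi hw) with h | h
        · exfalso; rw [h] at hw; exact inr_not_mem_cpy hw
        · exact h
      rw [if_pos hC1, if_pos hC2]; omega
    · rw [if_neg hC2]
      by_cases hC1 : (∃ z' : Fin l, Sum.inr z' ∉ F) ∧ (∃ i : Fin η, cpy k l i ⊆ F)
      · rw [if_pos hC1]; omega
      · rw [if_neg hC1]; omega

lemma pot_univ : pot (Set.univ : Set ((Fin η × Fin k) ⊕ Fin l)) = 0 := by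
  unfold pot; simp

lemma pot_empty (hk : 2 ≤ k) : pot (∅ : Set ((Fin η × Fin k) ⊕ Fin l)) = η * (k - 1) + l := by
  classical
  have hcpy : ∀ i : Fin η, ((∅ : Set ((Fin η × Fin k) ⊕ Fin l))ᶜ ∩ cpy k l i).ncard = k := by
    intro i
    rw [Set.compl_empty, Set.univ_inter]
    have hr : cpy k l i = Set.range (fun x : Fin k => (Sum.inl (i, x) : (Fin η × Fin k) ⊕ Fin l)) := by
      ext w
      simp only [cpy, Set.mem_setOf_eq, Set.mem_range]
      exact ⟨fun ⟨x, hx⟩ => ⟨x, hx.symm⟩, fun ⟨x, hx⟩ => ⟨x, hx.symm⟩⟩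
    rw [hr, ← Set.image_univ, Set.ncard_image_of_injective _ (fun a b hab => by simpa using hab),
      Set.ncard_univ, Nat.card_eq_fintype_card, Fintype.card_fin]
  have hctr : ((∅ : Set ((Fin η × Fin k) ⊕ Fin l))ᶜ ∩ ctrs η k l).ncard = l := by
    rw [Set.compl_empty, Set.univ_inter, ctrs, ← Set.image_univ,
      Set.ncard_image_of_injective _ Sum.inr_injective,
      Set.ncard_univ, Nat.card_eq_fintype_card, Fintype.card_fin]
  have hd : ¬ ((∃ z : Fin l, Sum.inr z ∉ (∅ : Set ((Fin η × Fin k) ⊕ Fin l))) ∧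
      (∃ i : Fin η, cpy k l i ⊆ (∅ : Set ((Fin η × Fin k) ⊕ Fin l)))) := by
    rintro ⟨-, i, hi⟩
    exact hi ⟨(⟨0, by omega⟩ : Fin k), rfl⟩
  unfold pot
  rw [if_neg hd, hctr]
  have h1 : ∑ i : Fin η, (((∅ : Set ((Fin η × Fin k) ⊕ Fin l))ᶜ ∩ cpy k l i).ncard - 1)
      = η * (k - 1) := by
    rw [Finset.sum_congr rfl fun i _ => by rw [hcpy i]]
    simp [Finset.sum_const, Finset.card_univ, mul_comm]
  rw [h1]
  simp

lemma zf_pot (hη : 0 < η) {F : Set ((Fin η × Fin k) ⊕ Fin l)} {u v}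
    (h : forceIn (windmillI η k l) Set.univ F u v) : pot (insert v F) = pot F := by
  obtain ⟨-, -, huF, hvF, hadj, huniq⟩ := h
  obtain ⟨j, y⟩ | z := v
  · apply potPA
    · ext w
      simp only [Set.mem_inter_iff, Set.mem_compl_iff, Set.mem_singleton_iff]
      constructor
      · rintro ⟨hwF, x, rfl⟩
        refine huniq _ (Set.mem_univ _) ?_ hwF
        obtain ⟨i, x'⟩ | z' := u
        · have hij : i = j := (wadj_inl_inl.mp hadj).1
          subst hij
          refine wadj_inl_inl.mpr ⟨rfl, ?_⟩
          rintro rfl; exact hwF huF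
        · exact wadj_of_inr Sum.inl_ne_inr
      · rintro rfl; exact ⟨hvF, y, rfl⟩
    · intro w hw
      obtain ⟨z, rfl⟩ := hw
      by_contra hzF
      have hne : u ≠ Sum.inr z := fun hh => hzF (hh ▸ huF)
      exact nomatch (huniq _ (Set.mem_univ _) (wadj_to_inr hne) hzF)
  · apply potPB
    · ext w
      simp only [Set.mem_inter_iff, Set.mem_compl_iff, Set.mem_singleton_iff]
      constructor
      · rintro ⟨hwF, z', rfl⟩
        have hne : u ≠ Sum.inr z' := fun hh => hwF (hh ▸ huF)
        exact huniq _ (Set.mem_univ _) (wadj_to_inr hne) hwF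
      · rintro rfl; exact ⟨hvF, z, rfl⟩
    · obtain ⟨i, x'⟩ | z' := u
      · refine ⟨i, fun w hw => ?_⟩
        obtain ⟨x'', rfl⟩ := hw
        by_contra hwF
        have hadj' : (windmillI η k l).Adj (Sum.inl (i,x')) (Sum.inl (i,x'')) := by
          refine wadj_inl_inl.mpr ⟨rfl, ?_⟩
          rintro rfl; exact hwF huF
        exact nomatch (huniq _ (Set.mem_univ _) hadj' hwF)
      · refine ⟨⟨0, hη⟩, fun w hw => ?_⟩
        obtain ⟨x'', rfl⟩ := hw
        by_contra hwF
        exact nomatch (huniq _ (Set.mem_univ _) (wadj_of_inr Sum.inl_ne_inr) hwF)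


lemma comp_eq_compl {F : Set ((Fin η × Fin k) ⊕ Fin l)} {v₀} (hv₀ : v₀ ∉ F)
    {z : Fin l} (hz : Sum.inr z ∉ F) :
    {w | reachAvoid (windmillI η k l) F v₀ w} = Fᶜ := by
  ext w
  simp only [Set.mem_setOf_eq, Set.mem_compl_iff]
  constructor
  · intro h
    induction h with
    | refl => exact hv₀
    | tail _ hstep ih => exact hstep.2.2
  · intro hw
    by_cases hwv : w = v₀
    · subst hwv; exact Relation.ReflTransGen.refl
    by_cases hvz : v₀ = Sum.inr z
    · subst hvz
      exact Relation.ReflTransGen.single ⟨wadj_of_inr hwv, hv₀, hw⟩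
    by_cases hwz : w = Sum.inr z
    · subst hwz
      exact Relation.ReflTransGen.single ⟨wadj_to_inr hvz, hv₀, hw⟩
    · exact Relation.ReflTransGen.head ⟨wadj_to_inr hvz, hv₀, hz⟩
        (Relation.ReflTransGen.single ⟨wadj_of_inr hwz, hz, hw⟩)

lemma comp_eq_copy {F : Set ((Fin η × Fin k) ⊕ Fin l)} {j : Fin η} {y₀ : Fin k}
    (hv₀ : Sum.inl (j, y₀) ∉ F) (hctr : ∀ z : Fin l, Sum.inr z ∈ F) :
    {w | reachAvoid (windmillI η k l) F (Sum.inl (j, y₀)) w} = Fᶜ ∩ cpy k l j := by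
  ext w
  simp only [Set.mem_setOf_eq, Set.mem_inter_iff, Set.mem_compl_iff]
  constructor
  · intro h
    induction h with
    | refl => exact ⟨hv₀, y₀, rfl⟩
    | tail _ hstep ih =>
      rename_i b c _
      refine ⟨hstep.2.2, ?_⟩
      obtain ⟨x, rfl⟩ := ih.2
      obtain ⟨i', x'⟩ | z' := c
      · obtain ⟨hji, -⟩ := wadj_inl_inl.mp hstep.1
        exact ⟨x', by rw [hji]⟩
      · exact absurd (hctr z') hstep.2.2
  · rintro ⟨hwF, x, rfl⟩
    by_cases hxy : x = y₀
    · subst hxy; exact Relation.ReflTransGen.refl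
    · exact Relation.ReflTransGen.single
        ⟨wadj_inl_inl.mpr ⟨rfl, Ne.symm hxy⟩, hv₀, hwF⟩

lemma r3_pot (hη : 0 < η) {F C F' : Set ((Fin η × Fin k) ⊕ Fin l)}
    (hC : C ∈ unfilledComponents (windmillI η k l) F)
    (h : Relation.ReflTransGen (rule3Step (windmillI η k l) (F ∪ C)) F F') :
    pot F' = pot F := by
  classical
  obtain ⟨v₀, hv₀, rfl⟩ := hC
  by_cases hz : ∃ z : Fin l, Sum.inr z ∉ F
  · obtain ⟨z, hz⟩ := hz
    rw [comp_eq_compl hv₀ hz, Set.union_compl_self] at h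
    induction h with
    | refl => rfl
    | tail _ hstep ih =>
      obtain ⟨u, v, hf, rfl⟩ := hstep
      have hf' : forceIn (windmillI η k l) Set.univ _ u v := hf
      rw [zf_pot hη hf', ih]
  · push_neg at hz
    obtain ⟨j, y₀⟩ | z := v₀
    swap
    · exact absurd (hz z) hv₀
    rw [comp_eq_copy hv₀ hz] at h
    suffices hmain : pot F' = pot F ∧ F ⊆ F' ∧ F' ⊆ F ∪ (Fᶜ ∩ cpy k l j) from hmain.1
    induction h with
    | refl => exact ⟨rfl, subset_rfl, Set.subset_union_left⟩
    | tail _ hstep ih =>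
      rename_i b c _
      obtain ⟨hpot, hFb, hbsub⟩ := ih
      obtain ⟨u, v, hf, rfl⟩ := hstep
      obtain ⟨huA, hvA, huF, hvF, hadj, huniq⟩ := hf
      have hvC : v ∈ Fᶜ ∩ cpy k l j := by
        rcases hvA with h | h
        · exact absurd (hFb h) hvF
        · exact h
      obtain ⟨hvFc, x, rfl⟩ := hvC
      have hkey : bᶜ ∩ cpy k l j = {Sum.inl (j, x)} := by
        ext w
        simp only [Set.mem_inter_iff, Set.mem_compl_iff, Set.mem_singleton_iff]
        constructor
        · rintro ⟨hwb, x', rfl⟩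
          have hwF : (Sum.inl (j, x') : (Fin η × Fin k) ⊕ Fin l) ∉ F :=
            fun hw => hwb (hFb hw)
          have hwA : (Sum.inl (j, x') : (Fin η × Fin k) ⊕ Fin l) ∈ F ∪ (Fᶜ ∩ cpy k l j) :=
            Or.inr ⟨hwF, x', rfl⟩
          refine huniq _ hwA ?_ hwb
          obtain ⟨i, x''⟩ | z' := u
          · have hij : i = j := (wadj_inl_inl.mp hadj).1
            subst hij
            refine wadj_inl_inl.mpr ⟨rfl, ?_⟩
            rintro rfl; exact hwb huF
          · exact wadj_of_inr Sum.inl_ne_inr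
        · rintro rfl; exact ⟨hvF, x, rfl⟩
      have hctrb : ctrs η k l ⊆ b := by
        rintro w ⟨z, rfl⟩; exact hFb (hz z)
      exact ⟨(potPA hkey hctrb).trans hpot, hFb.trans (Set.subset_insert _ _),
        Set.insert_subset hvA hbsub⟩

lemma win_pot (hη : 0 < η) {q : ℕ} {F : Set ((Fin η × Fin k) ⊕ Fin l)} {t : ℕ}
    (h : ZqWinFrom (windmillI η k l) q F t) : pot F ≤ t := by
  induction h with
  | done t => rw [pot_univ]; exact Nat.zero_le t
  | rule1 v hv h ih => exact (pot_le_insert hv).trans (Nat.add_le_add_right ih 1)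
  | rule2 u v huv h ih => exact ((zf_pot hη huv).symm.trans_le ih)
  | rule3 𝒞 h𝒞 hcard next hnext h ih =>
    have hne : 𝒞.Nonempty := Set.nonempty_of_ncard_ne_zero (by omega)
    obtain ⟨C, hC⟩ := hne
    have h1 : {C} ⊆ 𝒞 := Set.singleton_subset_iff.mpr hC
    have h2 : ({C} : Set (Set _)).Nonempty := Set.singleton_nonempty C
    have hchain := hnext {C} h1 h2
    rw [Set.sUnion_singleton] at hchain
    exact ((r3_pot hη (h𝒞 hC) hchain).symm.trans_le (ih {C} h1 h2))

lemma zfs_pot (hη : 0 < η) {S : Set ((Fin η × Fin k) ⊕ Fin l)}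
    (h : IsZeroForcingSet (windmillI η k l) S) : pot S = 0 := by
  have key : ∀ {A B : Set ((Fin η × Fin k) ⊕ Fin l)},
      Relation.ReflTransGen (zfStep (windmillI η k l)) A B → pot A = pot B := by
    intro A B h
    induction h with
    | refl => rfl
    | tail _ hstep ih =>
      obtain ⟨u, v, hf, rfl⟩ := hstep
      rw [ih, (zf_pot hη hf)]
  rw [key h, pot_univ]


lemma pot_zero_card (hη : 0 < η) {F : Set ((Fin η × Fin k) ⊕ Fin l)} (h : pot F = 0) :
    Fᶜ.ncard ≤ η := by
  classical
  unfold pot at h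
  have hsum : ∑ i : Fin η, ((Fᶜ ∩ cpy k l i).ncard - 1) = 0 := by omega
  have hcd : (Fᶜ ∩ ctrs η k l).ncard -
      (if (∃ z : Fin l, Sum.inr z ∉ F) ∧ (∃ i : Fin η, cpy k l i ⊆ F) then 1 else 0) = 0 := by
    omega
  have huc : ∀ i : Fin η, (Fᶜ ∩ cpy k l i).ncard ≤ 1 := by
    intro i
    have := (Finset.sum_eq_zero_iff).mp hsum i (Finset.mem_univ i)
    omega
  have hcc : (Fᶜ ∩ ctrs η k l).ncard ≤ 1 := by
    by_cases hcond : (∃ z : Fin l, Sum.inr z ∉ F) ∧ (∃ i : Fin η, cpy k l i ⊆ F)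
    · rw [if_pos hcond] at hcd; omega
    · rw [if_neg hcond] at hcd; omega
  set i₀ : Fin η := if h' : ∃ i : Fin η, cpy k l i ⊆ F then h'.choose else ⟨0, hη⟩ with hi₀
  have hfullspec : (∃ i : Fin η, cpy k l i ⊆ F) → cpy k l i₀ ⊆ F := by
    intro h'
    rw [hi₀, dif_pos h']
    exact h'.choose_spec
  have hkey : ∀ w ∈ Fᶜ, ∀ z : Fin l, w = Sum.inr z → cpy k l i₀ ⊆ F := by
    intro w hw z hwz
    apply hfullspec
    have hpos : 0 < (Fᶜ ∩ ctrs η k l).ncard := by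
      rw [Set.ncard_pos (Set.toFinite _)]
      exact ⟨w, hw, by rw [hwz]; exact ⟨z, rfl⟩⟩
    by_cases hcond : (∃ z : Fin l, Sum.inr z ∉ F) ∧ (∃ i : Fin η, cpy k l i ⊆ F)
    · exact hcond.2
    · rw [if_neg hcond] at hcd; omega
  have hinj : Set.InjOn (Sum.elim Prod.fst fun _ => i₀) Fᶜ := by
    rintro a ha b hb hab
    obtain ⟨ia, xa⟩ | za := a <;> obtain ⟨ib, xb⟩ | zb := b
    · simp only [Sum.elim_inl] at hab
      subst hab
      exact (Set.ncard_le_one_iff (Set.toFinite _)).mp (huc ia)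
        ⟨ha, xa, rfl⟩ ⟨hb, xb, rfl⟩
    · exfalso
      simp only [Sum.elim_inl, Sum.elim_inr] at hab
      subst hab
      exact ha (hkey _ hb zb rfl ⟨xa, rfl⟩)
    · exfalso
      simp only [Sum.elim_inl, Sum.elim_inr] at hab
      exact hb (hkey _ ha za rfl (hab ▸ ⟨xb, rfl⟩))
    · simp only [Sum.elim_inr] at hab
      have := (Set.ncard_le_one_iff (Set.toFinite _)).mp hcc
        (show Sum.inr za ∈ Fᶜ ∩ ctrs η k l from ⟨ha, za, rfl⟩)
        (show Sum.inr zb ∈ Fᶜ ∩ ctrs η k l from ⟨hb, zb, rfl⟩)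
      exact this
  calc Fᶜ.ncard ≤ (Set.univ : Set (Fin η)).ncard :=
        Set.ncard_le_ncard_of_injOn _ (fun a _ => Set.mem_univ _) hinj (Set.toFinite _)
    _ = η := by rw [Set.ncard_univ, Nat.card_eq_fintype_card, Fintype.card_fin]

lemma winMono {W : Type*} {G : SimpleGraph W} {q : ℕ} {F : Set W} {t : ℕ}
    (h : ZqWinFrom G q F t) : ZqWinFrom G q F (t + 1) := by
  induction h with
  | done t => exact .done (t + 1)
  | rule1 v hv h ih => exact .rule1 v hv ih
  | rule2 u v huv h ih => exact .rule2 u v huv ih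
  | rule3 𝒞 h𝒞 hcard next hnext h ih => exact .rule3 𝒞 h𝒞 hcard next hnext ih

lemma chainWin {W : Type*} {G : SimpleGraph W} {q : ℕ} {F F' : Set W}
    (h : Relation.ReflTransGen (zfStep G) F F') {t : ℕ} (hw : ZqWinFrom G q F' t) :
    ZqWinFrom G q F t := by
  induction h using Relation.ReflTransGen.head_induction_on with
  | refl => exact hw
  | head hstep _ ih =>
    obtain ⟨u, v, hf, rfl⟩ := hstep
    exact .rule2 u v hf ih

lemma buyWin {W : Type*} [Fintype W] {G : SimpleGraph W} {q : ℕ} :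
    ∀ (n : ℕ) (F F' : Set W), F ⊆ F' → (F' \ F).ncard = n → ∀ {t : ℕ},
      ZqWinFrom G q F' t → ZqWinFrom G q F (t + n) := by
  intro n
  induction n with
  | zero =>
    intro F F' hss hcard t hw
    have he : F' = F := by
      have h0 : F' \ F = ∅ := (Set.ncard_eq_zero (Set.toFinite _)).mp hcard
      exact le_antisymm (by rw [← Set.diff_union_of_subset hss, h0, Set.empty_union])
        hss
    rw [← he]; exact hw
  | succ n ih =>
    intro F F' hss hcard t hw
    have hne : (F' \ F).Nonempty := Set.nonempty_of_ncard_ne_zero (by omega)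
    obtain ⟨a, haF', haF⟩ := hne
    have h1 : insert a F ⊆ F' := Set.insert_subset haF' hss
    have h2 : (F' \ insert a F).ncard = n := by
      have he : F' \ insert a F = (F' \ F) \ {a} := by
        ext w
        simp only [Set.mem_diff, Set.mem_insert_iff, Set.mem_singleton_iff]
        tauto
      have hmem : a ∈ F' \ F := ⟨haF', haF⟩
      rw [he, Set.ncard_diff_singleton_of_mem hmem, hcard]
      omega
    exact .rule1 a haF (ih (insert a F) F' h1 h2 hw)


def Fm (η k l m : ℕ) : Set ((Fin η × Fin k) ⊕ Fin l) :=
  {w | ∀ (i : Fin η) (x : Fin k), w = Sum.inl (i, x) → (0 < x.val ∨ i.val < m)}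

lemma mem_Fm_inl {m : ℕ} {i : Fin η} {x : Fin k} :
    (Sum.inl (i, x) : (Fin η × Fin k) ⊕ Fin l) ∈ Fm η k l m ↔ (0 < x.val ∨ i.val < m) := by
  constructor
  · intro h; exact h i x rfl
  · intro h i' x' he
    simp only [Sum.inl.injEq, Prod.mk.injEq] at he
    obtain ⟨rfl, rfl⟩ := he
    exact h

lemma mem_Fm_inr {m : ℕ} {z : Fin l} : (Sum.inr z : (Fin η × Fin k) ⊕ Fin l) ∈ Fm η k l m :=
  fun _ _ he => nomatch he

lemma Fm_last : Fm η k l η = Set.univ := by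
  ext w
  simp only [Set.mem_univ, iff_true]
  rintro i x rfl
  exact Or.inr i.isLt

lemma Fm_step (hk : 2 ≤ k) {m : ℕ} (hm : m < η) :
    zfStep (windmillI η k l) (Fm η k l m) (Fm η k l (m+1)) := by
  refine ⟨Sum.inl (⟨m, hm⟩, ⟨1, by omega⟩), Sum.inl (⟨m, hm⟩, ⟨0, by omega⟩),
    ⟨Set.mem_univ _, Set.mem_univ _, ?_, ?_, ?_, ?_⟩, ?_⟩
  · exact mem_Fm_inl.mpr (Or.inl (by simp))
  · rw [mem_Fm_inl]; simp
  · exact wadj_inl_inl.mpr ⟨rfl, by simp [Fin.ext_iff]⟩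
  · intro w _ hadj hwF
    obtain ⟨i, x⟩ | z := w
    · obtain ⟨hi, -⟩ := wadj_inl_inl.mp hadj
      rw [mem_Fm_inl] at hwF
      push_neg at hwF
      have hx : x = (⟨0, by omega⟩ : Fin k) := by apply Fin.ext; simp; omega
      rw [← hi, hx]
    · exact absurd mem_Fm_inr hwF
  · ext w
    obtain ⟨i, x⟩ | z := w
    · simp only [Set.mem_insert_iff, mem_Fm_inl, Sum.inl.injEq, Prod.mk.injEq, Fin.ext_iff]
      omega
    · constructor
      · intro _; exact Set.mem_insert_of_mem _ mem_Fm_inr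
      · intro _; exact mem_Fm_inr

lemma Fm_chain (hk : 2 ≤ k) (j : ℕ) :
    Relation.ReflTransGen (zfStep (windmillI η k l)) (Fm η k l (η - j)) Set.univ := by
  induction j with
  | zero => rw [Nat.sub_zero, Fm_last]
  | succ j ih =>
    by_cases hj : j < η
    · have hm : η - (j+1) < η := by omega
      have heq : η - (j+1) + 1 = η - j := by omega
      refine Relation.ReflTransGen.head (Fm_step hk hm) ?_
      rw [heq]; exact ih
    · have heq : η - (j+1) = η - j := by omega
      rw [heq]; exact ih

lemma Fm0_isZFS (hk : 2 ≤ k) : IsZeroForcingSet (windmillI η k l) (Fm η k l 0) := by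
  have := Fm_chain (η := η) (l := l) hk η
  rwa [Nat.sub_self] at this

lemma Fm0_compl (hk0 : 0 < k) : (Fm η k l 0)ᶜ =
    Set.range (fun i : Fin η => (Sum.inl (i, ⟨0, hk0⟩) : (Fin η × Fin k) ⊕ Fin l)) := by
  ext w
  simp only [Set.mem_compl_iff, Set.mem_range]
  obtain ⟨i, x⟩ | z := w
  · rw [mem_Fm_inl]
    constructor
    · intro h
      push_neg at h
      refine ⟨i, ?_⟩
      have hx : x = (⟨0, hk0⟩ : Fin k) := by apply Fin.ext; simp; omega
      rw [hx]
    · rintro ⟨i', he⟩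
      simp only [Sum.inl.injEq, Prod.mk.injEq] at he
      obtain ⟨rfl, rfl⟩ := he
      simp
  · constructor
    · intro h; exact absurd mem_Fm_inr h
    · rintro ⟨i', he⟩; exact nomatch he

lemma card_V : Nat.card ((Fin η × Fin k) ⊕ Fin l) = η * k + l := by
  simp [Nat.card_eq_fintype_card]

lemma Fm0_ncard (hk : 2 ≤ k) : (Fm η k l 0).ncard = η * k + l - η := by
  have hk0 : 0 < k := by omega
  have h1 : ((Fm η k l 0)ᶜ).ncard = η := by
    rw [Fm0_compl hk0, ← Set.image_univ,
      Set.ncard_image_of_injective _ (fun a b hab => by simpa using hab),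
      Set.ncard_univ, Nat.card_eq_fintype_card, Fintype.card_fin]
  have h2 := Set.ncard_add_ncard_compl (Fm η k l 0) (Set.toFinite _) (Set.toFinite _)
  rw [h1, card_V] at h2
  omega

end Aux

/-- for `η, l ≥ 1`, `k ≥ 2` and every `q ≥ 0`,
`Z_q(W'(η,k,l)) = Z(W'(η,k,l)) = η(k-1) + l`. -/
theorem stmt9 (η k l : ℕ) (hη : 1 ≤ η) (hk : 2 ≤ k) (hl : 1 ≤ l) (q : ℕ) :
    qZeroForcingNumber (windmillI η k l) q = η * (k - 1) + l ∧
    zeroForcingNumber (windmillI η k l) = η * (k - 1) + l := by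
  have hη' : 0 < η := hη
  obtain ⟨k', rfl⟩ : ∃ k', k = k' + 2 := ⟨k - 2, by omega⟩
  have hk1 : (k' + 2) - 1 = k' + 1 := rfl
  have hmul1 : η * (k' + 2) = η * (k' + 1) + η := by ring
  have hcardS : (Fm η (k'+2) l 0).ncard = η * ((k'+2) - 1) + l := by
    rw [Fm0_ncard hk, hk1]
    omega
  have hzfs : IsZeroForcingSet (windmillI η (k'+2) l) (Fm η (k'+2) l 0) := Fm0_isZFS hk
  have hwin : ZqWinFrom (windmillI η (k'+2) l) q ∅ (η * ((k'+2)-1) + l) := by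
    have h0 : ZqWinFrom (windmillI η (k'+2) l) q (Fm η (k'+2) l 0) 0 :=
      chainWin hzfs (.done 0)
    have hb := buyWin (η * ((k'+2)-1) + l) ∅ (Fm η (k'+2) l 0) (Set.empty_subset _)
      (by rw [Set.diff_empty]; exact hcardS) h0
    simpa using hb
  constructor
  · apply le_antisymm
    · exact Nat.sInf_le hwin
    · refine le_csInf ⟨_, hwin⟩ ?_
      intro t ht
      have hle := win_pot hη' ht
      rwa [pot_empty hk] at hle
  · apply le_antisymm
    · exact Nat.sInf_le ⟨Fm η (k'+2) l 0, hcardS, hzfs⟩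
    · refine le_csInf ⟨_, ⟨Fm η (k'+2) l 0, hcardS, hzfs⟩⟩ ?_
      rintro n ⟨S, rfl, hS⟩
      have h0 : pot S = 0 := zfs_pot hη' hS
      have h1 : Sᶜ.ncard ≤ η := pot_zero_card hη' h0
      have h2 := Set.ncard_add_ncard_compl S (Set.toFinite _) (Set.toFinite _)
      rw [card_V] at h2
      rw [hk1]
      omega



end ZqForcing
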